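/- Let V be a finite type and α a type, and let S be a set of partial assignments V → Option α containing the all-none assignment, closed under union of disjoint assignments (if f, g ∈ S are disjoint then f ⊔ g ∈ S) and under difference (if f ∈ S and f ⊔ g ∈ S with f, g disjoint, then g ∈ S). Then every element of S is the union of a pairwise-disjoint finite family of minimal nontrivial elements of S. -/

import Mathlib

namespace Stmt13

variable {V α : Type*}

/-- Two partial assignments are disjoint if nowhere both defined. -/
def PDisjoint (f g : V → Option α) : Prop := ∀ v, f v = none ∨ g v = none

/-- Union of two partial assignments (left-biased; agrees with the disjoint
union when the assignments are disjoint). -/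
def pUnion (f g : V → Option α) : V → Option α := fun v => (f v).elim (g v) some

/-- `f` extends `g`: `f` agrees with `g` wherever `g` is defined. -/
def Extends (f g : V → Option α) : Prop := ∀ v, g v ≠ none → f v = g v

/-- The trivial (all-`none`) assignment. -/
def trivAsg : V → Option α := fun _ => none

/-- `f` is a minimal nontrivial element of `S`. -/
def MinimalIn (S : Set (V → Option α)) (f : V → Option α) : Prop :=
  f ∈ S ∧ f ≠ trivAsg ∧
    ∀ g ∈ S, g ≠ trivAsg → Extends f g → g = f

end Stmt13

section Aux
open Stmt13

variable {V α : Type*} [Fintype V] [DecidableEq V] [DecidableEq α]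

/-- Support of a partial assignment. -/
noncomputable def psupp (f : V → Option α) : Finset V :=
  Finset.univ.filter (fun v => f v ≠ none)

lemma mem_psupp {f : V → Option α} {v : V} : v ∈ psupp f ↔ f v ≠ none := by
  simp [psupp]

lemma nontriv_iff {f : V → Option α} : f ≠ trivAsg ↔ ∃ v, f v ≠ none := by
  constructor
  · intro h
    by_contra hc
    push_neg at hc
    exact h (funext fun v => by simpa [trivAsg] using hc v)
  · rintro ⟨v, hv⟩ h
    exact hv (by simp [h, trivAsg])

end Aux

open Stmt13 in
/-- Every member of a family of partial assignments containing the trivial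
assignment and closed under disjoint union and difference is the union of a
pairwise-disjoint finite family of minimal nontrivial elements. -/
theorem stmt13 {V α : Type*} [Fintype V] [DecidableEq V] [DecidableEq α]
    (S : Set (V → Option α))
    (htriv : trivAsg ∈ S)
    (hunion : ∀ f ∈ S, ∀ g ∈ S, PDisjoint f g → pUnion f g ∈ S)
    (hdiff : ∀ f ∈ S, ∀ g : V → Option α, PDisjoint f g →
        pUnion f g ∈ S → g ∈ S) :
    ∀ f ∈ S, ∃ F : Finset (V → Option α),
      (∀ g ∈ F, MinimalIn S g) ∧
      (∀ g ∈ F, ∀ g' ∈ F, g ≠ g' → PDisjoint g g') ∧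
      (∀ v : V, ∀ a : α, f v = some a ↔ ∃ g ∈ F, g v = some a) := by
  suffices H : ∀ n : ℕ, ∀ f ∈ S, (psupp f).card ≤ n →
      ∃ F : Finset (V → Option α),
      (∀ g ∈ F, MinimalIn S g) ∧
      (∀ g ∈ F, ∀ g' ∈ F, g ≠ g' → PDisjoint g g') ∧
      (∀ v : V, ∀ a : α, f v = some a ↔ ∃ g ∈ F, g v = some a) by
    intro f hf
    exact H (psupp f).card f hf le_rfl
  intro n
  induction n with
  | zero =>
    intro f hf hcard
    refine ⟨∅, by simp, by simp, ?_⟩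
    intro v a
    have hv : f v = none := by
      by_contra h
      have : v ∈ psupp f := mem_psupp.2 h
      simp [Finset.card_eq_zero.1 (Nat.le_zero.1 hcard)] at this
    simp [hv]
  | succ n ih =>
    intro f hf hcard
    by_cases hft : f = trivAsg
    · refine ⟨∅, by simp, by simp, ?_⟩
      intro v a
      simp [hft, trivAsg]
    · -- pick a minimal-support nontrivial element extended by f
      set T : Set (V → Option α) := {g | g ∈ S ∧ g ≠ trivAsg ∧ Extends f g} with hT
      have hfT : f ∈ T := ⟨hf, hft, fun v _ => rfl⟩
      have hne : {k | ∃ g ∈ T, (psupp g).card = k}.Nonempty := ⟨_, f, hfT, rfl⟩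
      obtain ⟨m, hmT, hmc⟩ := Nat.sInf_mem hne
      have hmin : ∀ g ∈ T, (psupp m).card ≤ (psupp g).card := by
        intro g hg
        rw [hmc]
        exact Nat.sInf_le ⟨g, hg, rfl⟩
      obtain ⟨hmS, hmnt, hfm⟩ := hmT
      -- m is minimal in S
      have hmmin : MinimalIn S m := by
        refine ⟨hmS, hmnt, ?_⟩
        intro g hgS hgnt hmg
        have hfg : Extends f g := by
          intro v hv
          rw [hfm v (by rw [hmg v hv]; exact hv), hmg v hv]
        have hsub : psupp g ⊆ psupp m := by
          intro v hv
          rw [mem_psupp] at hv ⊢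
          rw [hmg v hv]; exact hv
        have heq : psupp g = psupp m :=
          Finset.eq_of_subset_of_card_le hsub (hmin g ⟨hgS, hgnt, hfg⟩)
        funext v
        by_cases hv : m v = none
        · have : v ∉ psupp g := by rw [heq]; exact fun h => (mem_psupp.1 h) hv
          rw [mem_psupp] at this
          push_neg at this
          rw [this, hv]
        · exact (hmg v (by
            have : v ∈ psupp g := by rw [heq]; exact mem_psupp.2 hv
            exact mem_psupp.1 this)).symm
      -- define the remainder f'
      set f' : V → Option α := fun v => if m v = none then f v else none with hf'
      have hdisj : PDisjoint m f' := by
        intro v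
        by_cases h : m v = none
        · exact Or.inl h
        · exact Or.inr (by simp [hf', h])
      have hun : pUnion m f' = f := by
        funext v
        by_cases h : m v = none
        · simp [pUnion, h, hf']
        · obtain ⟨a, ha⟩ := Option.ne_none_iff_exists'.1 h
          rw [hfm v h]
          simp [pUnion, ha]
      have hf'S : f' ∈ S := hdiff m hmS f' hdisj (by rw [hun]; exact hf)
      have hsub' : psupp f' ⊆ psupp f := by
        intro v hv
        rw [mem_psupp] at hv ⊢
        simp only [hf'] at hv
        by_cases h : m v = none
        · simpa [h] using hv
        · simp [h] at hv
      obtain ⟨v0, hv0⟩ := nontriv_iff.1 hmnt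
      have hv0f : v0 ∈ psupp f := mem_psupp.2 (by rw [hfm v0 hv0]; exact hv0)
      have hv0f' : v0 ∉ psupp f' := by
        rw [mem_psupp]
        push_neg
        simp [hf', hv0]
      have hlt : (psupp f').card < (psupp f).card :=
        Finset.card_lt_card ⟨hsub', fun h => hv0f' (h hv0f)⟩
      obtain ⟨F', hF1, hF2, hF3⟩ := ih f' hf'S (by omega)
      -- supports of elements of F' avoid support of m
      have hdisjm : ∀ g ∈ F', PDisjoint m g := by
        intro g hg v
        by_cases h : g v = none
        · exact Or.inr h
        · obtain ⟨a, ha⟩ := Option.ne_none_iff_exists'.1 h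
          have : f' v = some a := (hF3 v a).2 ⟨g, hg, ha⟩
          left
          by_contra hm
          simp [hf', hm] at this
      refine ⟨insert m F', ?_, ?_, ?_⟩
      · intro g hg
        rcases Finset.mem_insert.1 hg with h | h
        · rw [h]; exact hmmin
        · exact hF1 g h
      · intro g hg g' hg' hgg'
        rcases Finset.mem_insert.1 hg with h | h <;>
          rcases Finset.mem_insert.1 hg' with h' | h'
        · exact absurd (h.trans h'.symm) hgg'
        · rw [h]; exact hdisjm g' h'
        · intro v
          rw [h']
          exact (hdisjm g h v).symm
        · exact hF2 g h g' h' hgg'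
      · intro v a
        constructor
        · intro hv
          by_cases h : m v = none
          · have : f' v = some a := by simp [hf', h, hv]
            obtain ⟨g, hg, hga⟩ := (hF3 v a).1 this
            exact ⟨g, Finset.mem_insert_of_mem hg, hga⟩
          · refine ⟨m, Finset.mem_insert_self _ _, ?_⟩
            rw [← hfm v h]; exact hv
        · rintro ⟨g, hg, hga⟩
          rcases Finset.mem_insert.1 hg with h | h
          · rw [hfm v (by rw [← h]; simp [hga]), ← h, hga]
          · have : f' v = some a := (hF3 v a).2 ⟨g, h, hga⟩
            simp only [hf'] at this
            by_cases hm : m v = none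
            · simpa [hm] using this
            · simp [hm] at this
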